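/- Let p be a prime and let k ≥ 3 be an integer with p ∤ k. Then ℛ' = {j ∈ ℛ : p ∤ j}. Moreover, if p ∤ (k−1) then #ℛ' = k − ⌊k/p⌋, while if k = m p^b + 1 with m, b ≥ 1 integers and p ∤ m, then #ℛ' = (1 − 1/p)(k − p^b) + (1 + 1/p). -/

import Mathlib

open scoped Classical

noncomputable section

namespace FFW

/-- `j_0 = j_0(k)`: the largest `j` with `0 < j < k`, `p ∤ j` and `p ∤ C(k, j)`. -/
def j0 (p k : ℕ) : ℕ :=
  Nat.findGreatest (fun j => 0 < j ∧ ¬ p ∣ j ∧ ¬ p ∣ Nat.choose k j) (k - 1)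

/-- The set `ℛ = {1, 2, …, j_0} ∪ {k−1, k}`. -/
def Rset (p k : ℕ) : Finset ℕ := Finset.Icc 1 (j0 p k) ∪ {k - 1, k}

/-- The set `ℛ' = {j ∈ ℕ : p ∤ j and p^v j ∈ ℛ for some v ≥ 0}` (its elements all lie
in `{1, …, k}`). -/
def R'set (p k : ℕ) : Finset ℕ :=
  (Finset.Icc 1 k).filter fun j => ¬ p ∣ j ∧ ∃ v : ℕ, p ^ v * j ∈ Rset p k

lemma dvd_choose_of_pow_dvd {p b M t : ℕ} (hp : p.Prime) (hM : p ^ b ∣ M)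
    (ht0 : 0 < t) (htb : t < p ^ b) : p ∣ M.choose t := by
  rcases le_or_gt t M with htM | htM
  · have hM0 : 0 < M := lt_of_lt_of_le ht0 htM
    have key : M * (M - 1).choose (t - 1) = M.choose t * t := by
      have h := Nat.add_one_mul_choose_eq (M - 1) (t - 1)
      simp only [Nat.succ_eq_add_one, Nat.sub_add_cancel hM0, Nat.sub_add_cancel ht0] at h
      exact h
    have hdvd : p ^ b ∣ M.choose t * t := key ▸ Dvd.dvd.mul_right hM _
    by_contra hc
    have hch0 : M.choose t ≠ 0 := (Nat.choose_pos htM).ne'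
    have hne : M.choose t * t ≠ 0 := Nat.mul_ne_zero hch0 ht0.ne'
    rw [hp.pow_dvd_iff_le_factorization hne, Nat.factorization_mul hch0 ht0.ne',
      Finsupp.add_apply, Nat.factorization_eq_zero_of_not_dvd hc, zero_add] at hdvd
    have : p ^ b ∣ t := (hp.pow_dvd_iff_le_factorization ht0.ne').2 hdvd
    exact absurd (Nat.le_of_dvd ht0 this) (not_le.2 htb)
  · rw [Nat.choose_eq_zero_of_lt htM]; exact dvd_zero p

lemma not_dvd_choose_pow {p m : ℕ} (hp : p.Prime) (hm : ¬ p ∣ m) :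
    ∀ b, ¬ p ∣ (m * p ^ b).choose (p ^ b)
  | 0 => by simpa using hm
  | (b + 1) => by
    haveI : Fact p.Prime := ⟨hp⟩
    intro hdvd
    apply not_dvd_choose_pow hp hm b
    have H := Choose.choose_modEq_choose_mod_mul_choose_div_nat
      (p := p) (n := m * p ^ b * p) (k := p ^ b * p)
    rw [Nat.mul_mod_left, Nat.mul_mod_left, Nat.mul_div_cancel _ hp.pos,
      Nat.mul_div_cancel _ hp.pos, Nat.choose_self, one_mul] at H
    rw [pow_succ, ← mul_assoc] at hdvd
    rw [Nat.dvd_iff_mod_eq_zero] at hdvd ⊢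
    unfold Nat.ModEq at H
    omega

lemma card_filter_not_dvd (p n : ℕ) :
    ((Finset.Icc 1 n).filter fun j => ¬ p ∣ j).card = n - n / p := by
  have h1 : Finset.Icc 1 n = Finset.Ioc 0 n := by
    ext j; simp only [Finset.mem_Icc, Finset.mem_Ioc]; omega
  have h2 := Finset.card_filter_add_card_filter_not
    (s := Finset.Icc 1 n) (p := fun j => p ∣ j)
  have h3 : ((Finset.Icc 1 n).filter fun j => p ∣ j).card = n / p := by
    rw [h1]; exact Nat.Ioc_filter_dvd_card_eq_div n p
  have h4 : (Finset.Icc 1 n).card = n := by rw [Nat.card_Icc]; omega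
  omega

lemma choose_succ_eq (M s : ℕ) (hs : 1 ≤ s) :
    (M + 1).choose s = M.choose (s - 1) + M.choose s := by
  obtain ⟨t, rfl⟩ : ∃ t, s = t + 1 := ⟨s - 1, by omega⟩
  simp [Nat.choose_succ_succ]

lemma caseA (p k : ℕ) (hp : p.Prime) (hk : 3 ≤ k) (hpk : ¬ p ∣ k) (hd : ¬ p ∣ (k - 1)) :
    R'set p k = (Rset p k).filter (fun j => ¬ p ∣ j) ∧ (R'set p k).card = k - k / p := by
  have hj0 : j0 p k = k - 1 := by
    apply Nat.findGreatest_eq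
    refine ⟨by omega, hd, ?_⟩
    have h1 : Nat.choose k (k - 1) = k := by
      rw [Nat.choose_symm (by omega : 1 ≤ k), Nat.choose_one_right]
    rw [h1]; exact hpk
  have hR : Rset p k = Finset.Icc 1 k := by
    rw [Rset, hj0]; ext j
    simp only [Finset.mem_union, Finset.mem_Icc, Finset.mem_insert, Finset.mem_singleton]
    omega
  have hR' : R'set p k = (Finset.Icc 1 k).filter fun j => ¬ p ∣ j := by
    rw [R'set, hR]; ext j
    simp only [Finset.mem_filter, Finset.mem_Icc]
    constructor
    · rintro ⟨h1, h2, -⟩; exact ⟨h1, h2⟩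
    · rintro ⟨h1, h2⟩
      exact ⟨h1, h2, 0, by simpa using h1⟩
  constructor
  · rw [hR', hR]
  · rw [hR', card_filter_not_dvd]

lemma caseB (p k m b : ℕ) (hp : p.Prime) (hm : 1 ≤ m) (hb : 1 ≤ b) (hpm : ¬ p ∣ m)
    (hkk : k = m * p ^ b + 1) :
    R'set p k = (Rset p k).filter (fun j => ¬ p ∣ j) ∧
    ((R'set p k).card : ℚ) = (1 - 1 / (p : ℚ)) * ((k : ℚ) - (p : ℚ) ^ b) + (1 + 1 / (p : ℚ)) := by
  obtain ⟨m', rfl⟩ : ∃ m', m = m' + 1 := ⟨m - 1, by omega⟩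
  obtain ⟨b', rfl⟩ : ∃ b', b = b' + 1 := ⟨b - 1, by omega⟩
  have hp2 : 2 ≤ p := hp.two_le
  have hpB : p ∣ p ^ (b' + 1) := dvd_pow_self p (Nat.succ_ne_zero b')
  have hB2 : 2 ≤ p ^ (b' + 1) := le_trans hp2 (Nat.le_self_pow (Nat.succ_ne_zero b') p)
  have hCB : (m' + 1) * p ^ (b' + 1) = m' * p ^ (b' + 1) + p ^ (b' + 1) := by ring
  have hkk' : k = m' * p ^ (b' + 1) + p ^ (b' + 1) + 1 := by rw [hkk, hCB]
  have hdvdk1 : p ∣ k - 1 := by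
    have h1 : p ∣ m' * p ^ (b' + 1) + p ^ (b' + 1) := dvd_add (Dvd.dvd.mul_left hpB m') hpB
    have he : k - 1 = m' * p ^ (b' + 1) + p ^ (b' + 1) := by omega
    rwa [he]
  have hpk : ¬ p ∣ k := by
    intro h
    have h1 : p ∣ k - (k - 1) := Nat.dvd_sub h hdvdk1
    have h2 : k - (k - 1) = 1 := by omega
    rw [h2] at h1
    have := Nat.le_of_dvd one_pos h1
    omega
  have hMd : p ^ (b' + 1) ∣ (m' + 1) * p ^ (b' + 1) := Dvd.intro_left _ rfl
  have hdvd_mid : ∀ s, 2 ≤ s → s < p ^ (b' + 1) → p ∣ Nat.choose k s := by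
    intro s h2 hs
    rw [hkk, choose_succ_eq _ _ (by omega)]
    exact dvd_add (dvd_choose_of_pow_dvd hp hMd (by omega) (by omega))
      (dvd_choose_of_pow_dvd hp hMd (by omega) hs)
  have hnot : ¬ p ∣ Nat.choose k (p ^ (b' + 1)) := by
    rw [hkk, choose_succ_eq _ _ (by omega)]
    intro hc
    have h1 : p ∣ Nat.choose ((m' + 1) * p ^ (b' + 1)) (p ^ (b' + 1) - 1) :=
      dvd_choose_of_pow_dvd hp hMd (by omega) (by omega)
    exact not_dvd_choose_pow hp hpm (b' + 1) ((Nat.dvd_add_right h1).mp hc)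
  have hBk : p ^ (b' + 1) < k := by omega
  have hj0 : j0 p k = k - p ^ (b' + 1) := by
    rw [j0, Nat.findGreatest_eq_iff]
    refine ⟨by omega, fun _ => ⟨by omega, ?_, ?_⟩, ?_⟩
    · intro hc
      have h1 : p ∣ m' * p ^ (b' + 1) := Dvd.dvd.mul_left hpB m'
      have he : k - p ^ (b' + 1) = m' * p ^ (b' + 1) + 1 := by omega
      rw [he] at hc
      have h3 : p ∣ 1 := (Nat.dvd_add_right h1).mp hc
      have := Nat.le_of_dvd one_pos h3
      omega
    · rw [Nat.choose_symm (by omega : p ^ (b' + 1) ≤ k)]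
      exact hnot
    · intro j hj1 hj2
      rintro ⟨hj0', hjp, hjc⟩
      rcases eq_or_lt_of_le hj2 with heq | hlt
      · exact hjp (heq ▸ hdvdk1)
      · apply hjc
        have heq : j = k - (k - j) := by omega
        rw [heq, Nat.choose_symm (by omega : k - j ≤ k)]
        exact hdvd_mid (k - j) (by omega) (by omega)
  have hRset : Rset p k = Finset.Icc 1 (k - p ^ (b' + 1)) ∪ {k - 1, k} := by
    rw [Rset, hj0]
  have key : R'set p k =
      insert k ((Finset.Icc 1 (k - p ^ (b' + 1))).filter fun j => ¬ p ∣ j) := by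
    ext j
    simp only [R'set, hRset, Finset.mem_filter, Finset.mem_Icc, Finset.mem_insert,
      Finset.mem_union, Finset.mem_singleton]
    constructor
    · rintro ⟨⟨hj1, hjk⟩, hjp, v, hv⟩
      rcases hv with ⟨hv1, hv2⟩ | hv | hv
      · right
        have hle : j ≤ p ^ v * j := Nat.le_mul_of_pos_left j (pow_pos hp.pos v)
        exact ⟨⟨hj1, by omega⟩, hjp⟩
      · right
        have he : p ^ v * j = (m' + 1) * p ^ (b' + 1) := by omega
        have hj0' : j ≠ 0 := by omega
        have hvb : v = b' + 1 := by
          have hfac := congrArg (fun n => n.factorization p) he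
          simp only [Nat.factorization_mul (pow_ne_zero v hp.pos.ne') hj0',
            Nat.factorization_mul (Nat.succ_ne_zero m') (pow_ne_zero (b' + 1) hp.pos.ne'),
            hp.factorization_pow, Finsupp.add_apply, Finsupp.single_eq_same,
            Nat.factorization_eq_zero_of_not_dvd hjp,
            Nat.factorization_eq_zero_of_not_dvd hpm] at hfac
          omega
        have hjm : j = m' + 1 := by
          rw [hvb, mul_comm (m' + 1)] at he
          exact Nat.eq_of_mul_eq_mul_left (pow_pos hp.pos _) he
        have hm'le : m' ≤ m' * p ^ (b' + 1) := Nat.le_mul_of_pos_right m' (pow_pos hp.pos _)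
        exact ⟨⟨by omega, by omega⟩, hjp⟩
      · left
        have hv0 : v = 0 := by
          by_contra h
          exact hpk (hv ▸ Dvd.dvd.mul_right (dvd_pow_self p h) j)
        rw [hv0, pow_zero, one_mul] at hv
        exact hv
    · rintro (rfl | ⟨⟨h1, h2⟩, hjp⟩)
      · exact ⟨⟨by omega, le_rfl⟩, hpk, 0, Or.inr (Or.inr (by simp))⟩
      · exact ⟨⟨h1, by omega⟩, hjp, 0, Or.inl ⟨by simpa using h1, by simpa using h2⟩⟩
  have hfil : (Rset p k).filter (fun j => ¬ p ∣ j) =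
      insert k ((Finset.Icc 1 (k - p ^ (b' + 1))).filter fun j => ¬ p ∣ j) := by
    ext j
    simp only [hRset, Finset.mem_filter, Finset.mem_union, Finset.mem_Icc, Finset.mem_insert,
      Finset.mem_singleton]
    constructor
    · rintro ⟨⟨h1, h2⟩ | rfl | rfl, hjp⟩
      · right; exact ⟨⟨h1, h2⟩, hjp⟩
      · exact absurd hdvdk1 hjp
      · exact Or.inl rfl
    · rintro (rfl | ⟨⟨h1, h2⟩, hjp⟩)
      · exact ⟨Or.inr (Or.inr rfl), hpk⟩
      · exact ⟨Or.inl ⟨h1, h2⟩, hjp⟩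
  refine ⟨key.trans hfil.symm, ?_⟩
  have hknotmem : k ∉ (Finset.Icc 1 (k - p ^ (b' + 1))).filter fun j => ¬ p ∣ j := by
    simp only [Finset.mem_filter, Finset.mem_Icc]
    rintro ⟨⟨-, h2⟩, -⟩
    omega
  have hdiv : (k - p ^ (b' + 1)) / p = m' * p ^ b' := by
    have hmm : m' * p ^ (b' + 1) = p * (m' * p ^ b') := by ring
    have he : k - p ^ (b' + 1) = p * (m' * p ^ b') + 1 := by omega
    rw [he, Nat.mul_add_div hp.pos, Nat.div_eq_of_lt hp.one_lt]
    omega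
  have hcard1 : (R'set p k).card =
      ((Finset.Icc 1 (k - p ^ (b' + 1))).filter fun j => ¬ p ∣ j).card + 1 := by
    rw [key, Finset.card_insert_of_notMem hknotmem]
  have h1 : m' * p ^ b' ≤ (m' * p ^ b') * p := Nat.le_mul_of_pos_right _ hp.pos
  have hDC : m' * p ^ (b' + 1) = (m' * p ^ b') * p := by ring
  have hcard3 : (R'set p k).card = (m' * p ^ b') * p - m' * p ^ b' + 2 := by
    rw [hcard1, card_filter_not_dvd, hdiv]
    omega
  rw [hcard3]
  have hpQ : (p : ℚ) ≠ 0 := Nat.cast_ne_zero.mpr hp.pos.ne'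
  have hkQ : (k : ℚ) = (m' : ℚ) * (p : ℚ) ^ (b' + 1) + (p : ℚ) ^ (b' + 1) + 1 := by
    exact_mod_cast congrArg (Nat.cast : ℕ → ℚ) hkk'
  push_cast [Nat.cast_sub h1]
  rw [hkQ]
  field_simp
  ring

/-- For a prime `p` and `k ≥ 3` with `p ∤ k`:
`ℛ' = {j ∈ ℛ : p ∤ j}`; if `p ∤ (k−1)` then `#ℛ' = k − ⌊k/p⌋`; and if
`k = m·p^b + 1` with `m, b ≥ 1` and `p ∤ m`, then `#ℛ' = (1 − 1/p)(k − p^b) + (1 + 1/p)`. -/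
theorem R'set_eq_and_card (p k : ℕ) (hp : p.Prime) (hk : 3 ≤ k) (hpk : ¬ p ∣ k) :
    R'set p k = (Rset p k).filter (fun j => ¬ p ∣ j) ∧
    (¬ p ∣ (k - 1) → (R'set p k).card = k - k / p) ∧
    (∀ m b : ℕ, 1 ≤ m → 1 ≤ b → ¬ p ∣ m → k = m * p ^ b + 1 →
      ((R'set p k).card : ℚ) = (1 - 1 / (p : ℚ)) * ((k : ℚ) - (p : ℚ) ^ b) + (1 + 1 / (p : ℚ))) := by
  refine ⟨?_, fun hd => (caseA p k hp hk hpk hd).2,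
    fun m b hm hb hpm hkk => (caseB p k m b hp hm hb hpm hkk).2⟩
  by_cases hd : p ∣ (k - 1)
  · have hk1 : k - 1 ≠ 0 := by omega
    have hb : 1 ≤ (k - 1).factorization p := hp.factorization_pos_of_dvd hk1 hd
    have hpm : ¬ p ∣ (k - 1) / p ^ (k - 1).factorization p := Nat.not_dvd_ordCompl hp hk1
    have hmm : p ^ (k - 1).factorization p * ((k - 1) / p ^ (k - 1).factorization p) = k - 1 :=
      Nat.ordProj_mul_ordCompl_eq_self (k - 1) p
    have hm : 1 ≤ (k - 1) / p ^ (k - 1).factorization p := Nat.ordCompl_pos p hk1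
    have hkk : k = ((k - 1) / p ^ (k - 1).factorization p) * p ^ (k - 1).factorization p + 1 := by
      rw [mul_comm] at hmm; omega
    exact (caseB p k _ _ hp hm hb hpm hkk).1
  · exact (caseA p k hp hk hpk hd).1

end FFW
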